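/- Let λ, μ be typical weights with (λ₁+μ₁) + (λ₂+μ₂) = 0, and set M = L(λ)⊗L(μ). Suppose φ₁ : F → M and φ₂ : M → F are F-linear maps that are equivariant for the trivial action on F, i.e.: Δ(E)(φ₁(1)) = 0, Δ(F)(φ₁(1)) = 0, Δ(Q(h))(φ₁(1)) = φ₁(1) for all h ∈ ℤ², and φ₂∘Δ(E) = 0, φ₂∘Δ(F) = 0, φ₂∘Δ(Q(h)) = φ₂ for all h ∈ ℤ². Then φ₂∘φ₁ = 0. (This is the mechanism forcing the quantum U_q(gl(1|1))-invariant of every closed link to vanish: the trivial representation is not a direct summand of L(λ)⊗L(λ)*.) -/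

import Mathlib

set_option synthInstance.maxHeartbeats 1000000
set_option maxHeartbeats 1000000
noncomputable section
open scoped TensorProduct

abbrev F : Type := RatFunc ℂ
def q : F := RatFunc.X

/-- The quantum integer [n] = (qⁿ − q⁻ⁿ)/(q − q⁻¹). -/
def qn (n : ℤ) : F := (q ^ n - q ^ (-n)) / (q - q⁻¹)

abbrev V : Type := Fin 2 → F
def v0 : V := Pi.single 0 1
def v1 : V := Pi.single 1 1

def Eop : V →ₗ[F] V := Matrix.toLin' !![0, 1; 0, 0]
def Fop (l : ℤ × ℤ) : V →ₗ[F] V := Matrix.toLin' !![0, 0; qn (l.1 + l.2), 0]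
def Qop (l : ℤ × ℤ) (h : ℤ × ℤ) : V →ₗ[F] V :=
  Matrix.toLin' !![q ^ (h.1 * l.1 + h.2 * l.2), 0; 0, q ^ (h.1 * (l.1 - 1) + h.2 * (l.2 + 1))]
def Pop (l : ℤ × ℤ) : V →ₗ[F] V :=
  Matrix.toLin' !![(-1 : F) ^ l.2, 0; 0, (-1 : F) ^ (l.2 + 1)]
def Kop (l : ℤ × ℤ) : V →ₗ[F] V := Qop l (1, 1)
def Kinv (l : ℤ × ℤ) : V →ₗ[F] V := Qop l (-1, -1)

def ΔE (l m : ℤ × ℤ) : V ⊗[F] V →ₗ[F] V ⊗[F] V :=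
  TensorProduct.map Eop (Kinv m) + TensorProduct.map (Pop l) Eop
def ΔF (l m : ℤ × ℤ) : V ⊗[F] V →ₗ[F] V ⊗[F] V :=
  TensorProduct.map (Fop l) LinearMap.id + TensorProduct.map (Kop l ∘ₗ Pop l) (Fop m)
def ΔQ (l m : ℤ × ℤ) (h : ℤ × ℤ) : V ⊗[F] V →ₗ[F] V ⊗[F] V :=
  TensorProduct.map (Qop l h) (Qop m h)

-- q lemmas
lemma q_ne_zero : q ≠ 0 := RatFunc.X_ne_zero
lemma q_pow_nat_ne_one (k : ℕ) (hk : k ≠ 0) : q ^ k ≠ 1 := by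
  intro h
  have h2 : (Polynomial.X : Polynomial ℂ) ^ k = 1 := by
    apply IsFractionRing.injective (Polynomial ℂ) (RatFunc ℂ)
    simpa [map_pow, RatFunc.algebraMap_X, q] using h
  have := congrArg Polynomial.natDegree h2
  simp [Polynomial.natDegree_X_pow] at this
  exact hk this
lemma q_zpow_ne_one (n : ℤ) (hn : n ≠ 0) : q ^ n ≠ 1 := by
  intro h
  have hk : q ^ (n.natAbs : ℕ) = 1 := by
    rcases Int.natAbs_eq n with he | he
    · rw [← zpow_natCast, ← he, h]
    · rw [← zpow_natCast, ← neg_neg ((n.natAbs : ℤ)), ← he, zpow_neg, h, inv_one]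
  exact q_pow_nat_ne_one _ (Int.natAbs_ne_zero.mpr hn) hk
lemma qn_ne_zero (n : ℤ) (hn : n ≠ 0) : qn n ≠ 0 := by
  unfold qn
  apply div_ne_zero
  · have key : q ^ n - q ^ (-n) = q ^ (-n) * (q ^ (2*n) - 1) := by
      rw [mul_sub, ← zpow_add₀ q_ne_zero, mul_one]
      congr 1
      ring
    rw [key]
    exact mul_ne_zero (zpow_ne_zero _ q_ne_zero)
      (sub_ne_zero.mpr (q_zpow_ne_one (2*n) (by omega)))
  · intro h
    have hq : q = q⁻¹ := sub_eq_zero.mp h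
    have : q ^ (2:ℕ) = 1 := by
      rw [pow_two]; nth_rewrite 2 [hq]; exact mul_inv_cancel₀ q_ne_zero
    exact q_pow_nat_ne_one 2 (by norm_num) this

-- operator action lemmas
lemma Eop_v0 : Eop v0 = 0 := by
  ext i; fin_cases i <;>
    simp [Eop, v0, Matrix.toLin'_apply, Matrix.mulVec_single]
lemma Eop_v1 : Eop v1 = v0 := by
  ext i; fin_cases i <;>
    simp [Eop, v0, v1, Matrix.toLin'_apply, Matrix.mulVec_single]
lemma Fop_v0 (l : ℤ × ℤ) : Fop l v0 = qn (l.1 + l.2) • v1 := by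
  ext i; fin_cases i <;>
    simp [Fop, v0, v1, Matrix.toLin'_apply, Matrix.mulVec_single]
lemma Fop_v1 (l : ℤ × ℤ) : Fop l v1 = 0 := by
  ext i; fin_cases i <;>
    simp [Fop, v1, Matrix.toLin'_apply, Matrix.mulVec_single]
lemma Qop_v0 (l h : ℤ × ℤ) : Qop l h v0 = q ^ (h.1 * l.1 + h.2 * l.2) • v0 := by
  ext i; fin_cases i <;>
    simp [Qop, v0, Matrix.toLin'_apply, Matrix.mulVec_single]
lemma Qop_v1 (l h : ℤ × ℤ) : Qop l h v1 = q ^ (h.1 * (l.1 - 1) + h.2 * (l.2 + 1)) • v1 := by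
  ext i; fin_cases i <;>
    simp [Qop, v1, Matrix.toLin'_apply, Matrix.mulVec_single]
lemma Pop_v0 (l : ℤ × ℤ) : Pop l v0 = (-1 : F) ^ l.2 • v0 := by
  ext i; fin_cases i <;>
    simp [Pop, v0, Matrix.toLin'_apply, Matrix.mulVec_single]
lemma Pop_v1 (l : ℤ × ℤ) : Pop l v1 = (-1 : F) ^ (l.2 + 1) • v1 := by
  ext i; fin_cases i <;>
    simp [Pop, v1, Matrix.toLin'_apply, Matrix.mulVec_single]
lemma Kinv_v0 (m : ℤ × ℤ) : Kinv m v0 = q ^ (-(m.1 + m.2)) • v0 := by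
  rw [Kinv, Qop_v0]; congr 1; ring_nf
lemma Kinv_v1 (m : ℤ × ℤ) : Kinv m v1 = q ^ (-(m.1 + m.2)) • v1 := by
  rw [Kinv, Qop_v1]; congr 1; ring_nf
lemma Kop_v0 (l : ℤ × ℤ) : Kop l v0 = q ^ (l.1 + l.2) • v0 := by
  rw [Kop, Qop_v0]; congr 1; ring
lemma Kop_v1 (l : ℤ × ℤ) : Kop l v1 = q ^ (l.1 + l.2) • v1 := by
  rw [Kop, Qop_v1]; congr 1; ring

lemma ΔE_00 (l m : ℤ × ℤ) : ΔE l m (v0 ⊗ₜ[F] v0) = 0 := by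
  simp [ΔE, TensorProduct.map_tmul, Eop_v0, Kinv_v0, Pop_v0]
lemma ΔE_01 (l m : ℤ × ℤ) : ΔE l m (v0 ⊗ₜ[F] v1) = ((-1 : F) ^ l.2) • (v0 ⊗ₜ[F] v0) := by
  simp [ΔE, TensorProduct.map_tmul, Eop_v0, Eop_v1, Kinv_v1, Pop_v0, TensorProduct.smul_tmul]
lemma ΔE_10 (l m : ℤ × ℤ) : ΔE l m (v1 ⊗ₜ[F] v0) = (q ^ (-(m.1 + m.2))) • (v0 ⊗ₜ[F] v0) := by
  simp [ΔE, TensorProduct.map_tmul, Eop_v0, Eop_v1, Kinv_v0, Pop_v1, TensorProduct.tmul_smul]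
lemma ΔE_11 (l m : ℤ × ℤ) : ΔE l m (v1 ⊗ₜ[F] v1) =
    (q ^ (-(m.1 + m.2))) • (v0 ⊗ₜ[F] v1) + ((-1 : F) ^ (l.2 + 1)) • (v1 ⊗ₜ[F] v0) := by
  simp [ΔE, TensorProduct.map_tmul, Eop_v1, Kinv_v1, Pop_v1, TensorProduct.tmul_smul,
    TensorProduct.smul_tmul]
lemma ΔF_00 (l m : ℤ × ℤ) : ΔF l m (v0 ⊗ₜ[F] v0) =
    qn (l.1 + l.2) • (v1 ⊗ₜ[F] v0) +
      ((-1 : F) ^ l.2 * q ^ (l.1 + l.2) * qn (m.1 + m.2)) • (v0 ⊗ₜ[F] v1) := by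
  simp [ΔF, TensorProduct.map_tmul, Fop_v0, Pop_v0, Kop_v0, TensorProduct.smul_tmul,
    TensorProduct.tmul_smul, smul_smul, mul_comm, mul_assoc, mul_left_comm]
lemma ΔF_01 (l m : ℤ × ℤ) : ΔF l m (v0 ⊗ₜ[F] v1) = qn (l.1 + l.2) • (v1 ⊗ₜ[F] v1) := by
  simp [ΔF, TensorProduct.map_tmul, Fop_v0, Fop_v1, Pop_v0, Kop_v0, TensorProduct.smul_tmul]
lemma ΔF_10 (l m : ℤ × ℤ) : ΔF l m (v1 ⊗ₜ[F] v0) =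
    ((-1 : F) ^ (l.2 + 1) * q ^ (l.1 + l.2) * qn (m.1 + m.2)) • (v1 ⊗ₜ[F] v1) := by
  simp [ΔF, TensorProduct.map_tmul, Fop_v0, Fop_v1, Pop_v1, Kop_v1, TensorProduct.smul_tmul,
    TensorProduct.tmul_smul, smul_smul, mul_comm, mul_assoc, mul_left_comm]
lemma ΔF_11 (l m : ℤ × ℤ) : ΔF l m (v1 ⊗ₜ[F] v1) = 0 := by
  simp [ΔF, TensorProduct.map_tmul, Fop_v1, Pop_v1, Kop_v1]

def bV : Module.Basis (Fin 2) F V := Pi.basisFun F (Fin 2)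
def bT : Module.Basis (Fin 2 × Fin 2) F (V ⊗[F] V) := bV.tensorProduct bV
lemma bT00 : bT (0,0) = v0 ⊗ₜ[F] v0 := by
  rw [bT, Module.Basis.tensorProduct_apply]
  simp [bV, Pi.basisFun_apply, v0, v1]
lemma bT01 : bT (0,1) = v0 ⊗ₜ[F] v1 := by
  rw [bT, Module.Basis.tensorProduct_apply]
  simp [bV, Pi.basisFun_apply, v0, v1]
lemma bT10 : bT (1,0) = v1 ⊗ₜ[F] v0 := by
  rw [bT, Module.Basis.tensorProduct_apply]
  simp [bV, Pi.basisFun_apply, v0, v1]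
lemma bT11 : bT (1,1) = v1 ⊗ₜ[F] v1 := by
  rw [bT, Module.Basis.tensorProduct_apply]
  simp [bV, Pi.basisFun_apply, v0, v1]

lemma rT00 : bT.repr (v0 ⊗ₜ[F] v0) = Finsupp.single (0,0) 1 := by
  rw [← bT00, Module.Basis.repr_self]
lemma rT01 : bT.repr (v0 ⊗ₜ[F] v1) = Finsupp.single (0,1) 1 := by
  rw [← bT01, Module.Basis.repr_self]
lemma rT10 : bT.repr (v1 ⊗ₜ[F] v0) = Finsupp.single (1,0) 1 := by
  rw [← bT10, Module.Basis.repr_self]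
lemma rT11 : bT.repr (v1 ⊗ₜ[F] v1) = Finsupp.single (1,1) 1 := by
  rw [← bT11, Module.Basis.repr_self]

lemma coeffs_eq_zero {x00 x01 x10 x11 : F}
    (h : x00 • (v0 ⊗ₜ[F] v0) + x01 • (v0 ⊗ₜ[F] v1) + x10 • (v1 ⊗ₜ[F] v0)
        + x11 • (v1 ⊗ₜ[F] v1) = 0) :
    x00 = 0 ∧ x01 = 0 ∧ x10 = 0 ∧ x11 = 0 := by
  have H := congrArg bT.repr h
  simp only [map_add, map_smul, rT00, rT01, rT10, rT11, map_zero] at H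
  refine ⟨?_, ?_, ?_, ?_⟩
  · have h' := congrArg (fun f => f (0,0)) H
    simpa [Finsupp.single_apply, Prod.ext_iff] using h'
  · have h' := congrArg (fun f => f (0,1)) H
    simpa [Finsupp.single_apply, Prod.ext_iff] using h'
  · have h' := congrArg (fun f => f (1,0)) H
    simpa [Finsupp.single_apply, Prod.ext_iff] using h'
  · have h' := congrArg (fun f => f (1,1)) H
    simpa [Finsupp.single_apply, Prod.ext_iff] using h'

/-- if `λ+μ` is atypical then the composition of any equivariant maps
`F → L(λ)⊗L(μ) → F` (for the trivial action on `F`) vanishes; this is why the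
`U_q(gl(1|1))`-invariant of every closed link is zero. -/
theorem trivial_not_direct_summand (l m : ℤ × ℤ)
    (hl : l.1 + l.2 ≠ 0) (hm : m.1 + m.2 ≠ 0) (hsum : l.1 + m.1 + (l.2 + m.2) = 0)
    (φ₁ : F →ₗ[F] V ⊗[F] V) (φ₂ : V ⊗[F] V →ₗ[F] F)
    (h1E : ΔE l m (φ₁ 1) = 0) (h1F : ΔF l m (φ₁ 1) = 0)
    (h1Q : ∀ h : ℤ × ℤ, ΔQ l m h (φ₁ 1) = φ₁ 1)
    (h2E : φ₂ ∘ₗ ΔE l m = 0) (h2F : φ₂ ∘ₗ ΔF l m = 0)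
    (h2Q : ∀ h : ℤ × ℤ, φ₂ ∘ₗ ΔQ l m h = φ₂) :
    φ₂ ∘ₗ φ₁ = 0 := by
  set w := φ₁ 1 with hwdef
  set a := bT.repr w (0,0) with hadef
  set b := bT.repr w (0,1) with hbdef
  set c := bT.repr w (1,0) with hcdef
  set d := bT.repr w (1,1) with hddef
  have hw : w = a • (v0 ⊗ₜ[F] v0) + b • (v0 ⊗ₜ[F] v1) + c • (v1 ⊗ₜ[F] v0)
      + d • (v1 ⊗ₜ[F] v1) := by
    have h := bT.sum_repr w
    rw [Fintype.sum_prod_type] at h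
    simp only [Fin.sum_univ_two, bT00, bT01, bT10, bT11] at h
    rw [← h]; abel
  rw [hw] at h1E h1F
  simp only [map_add, map_smul, ΔE_00, ΔE_01, ΔE_10, ΔE_11,
    ΔF_00, ΔF_01, ΔF_10, ΔF_11, smul_zero, smul_add, smul_smul, zero_add, add_zero] at h1E h1F
  have hE' : (b * (-1 : F) ^ l.2 + c * q ^ (-(m.1 + m.2))) • (v0 ⊗ₜ[F] v0)
      + (d * q ^ (-(m.1 + m.2))) • (v0 ⊗ₜ[F] v1)
      + (d * (-1 : F) ^ (l.2 + 1)) • (v1 ⊗ₜ[F] v0) + (0 : F) • (v1 ⊗ₜ[F] v1) = 0 := by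
    rw [← h1E]; rw [add_smul, zero_smul, add_zero]; abel
  have hF' : (0 : F) • (v0 ⊗ₜ[F] v0)
      + (a * ((-1 : F) ^ l.2 * q ^ (l.1 + l.2) * qn (m.1 + m.2))) • (v0 ⊗ₜ[F] v1)
      + (a * qn (l.1 + l.2)) • (v1 ⊗ₜ[F] v0)
      + (b * qn (l.1 + l.2) + c * ((-1 : F) ^ (l.2 + 1) * q ^ (l.1 + l.2) * qn (m.1 + m.2)))
        • (v1 ⊗ₜ[F] v1) = 0 := by
    rw [← h1F]; rw [add_smul, zero_smul, zero_add]; abel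
  obtain ⟨hbc, hd1, -, -⟩ := coeffs_eq_zero hE'
  obtain ⟨-, -, ha1, -⟩ := coeffs_eq_zero hF'
  have ha : a = 0 := by
    rcases mul_eq_zero.mp ha1 with h | h
    · exact h
    · exact absurd h (qn_ne_zero _ hl)
  have hd : d = 0 := by
    rcases mul_eq_zero.mp hd1 with h | h
    · exact h
    · exact absurd h (zpow_ne_zero _ q_ne_zero)
  -- w is in the image of ΔE
  have hsq : (-1 : F) ^ l.2 * (-1 : F) ^ l.2 = 1 := by
    rw [← zpow_add₀ (by norm_num : (-1 : F) ≠ 0), show l.2 + l.2 = 2 * l.2 by ring,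
      zpow_mul]
    norm_num
  have hstep : ((-1 : F) ^ l.2) * (-1 : F) ^ (l.2 + 1) = -1 := by
    rw [zpow_add₀ (by norm_num : (-1 : F) ≠ 0), zpow_one, ← mul_assoc, hsq, one_mul]
  set t : F := -((-1 : F) ^ l.2) * c with htdef
  have hb' : t * q ^ (-(m.1 + m.2)) = b := by
    rw [htdef]
    linear_combination (-((-1 : F) ^ l.2)) * hbc + b * hsq
  have hc' : t * (-1 : F) ^ (l.2 + 1) = c := by
    rw [htdef]
    linear_combination (-c) * hstep
  have himg : w = ΔE l m (t • (v1 ⊗ₜ[F] v1)) := by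
    rw [map_smul, ΔE_11, hw, ha, hd, smul_add, smul_smul, smul_smul, hb', hc',
      zero_smul, zero_smul, zero_add, add_zero]
  have hzero : φ₂ w = 0 := by
    rw [himg, ← LinearMap.comp_apply, h2E, LinearMap.zero_apply]
  apply LinearMap.ext_ring
  simpa using hzero
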